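/- Let h ∈ ℝ[x₁,…,x_n], κ_h > 0, β⁻ < 0. Suppose there exist polynomials μ₀, μ₁, …, μₘ, each SOS, such that (1+μ₀(x))·(β⁻−h(x)) + Σ_{i=1}^m μᵢ(x)·(ḣ(x,uⁱ)+κ_h h(x)) is SOS. Then for every x ∈ ℝⁿ with h(x) > β⁻, there exists u ∈ 𝒰 such that ḣ(x,u) > −κ_h h(x). -/
import Mathlib


open MvPolynomial Finset

/-- A polynomial is a sum of squares. -/
def IsSOS {n : ℕ} (p : MvPolynomial (Fin n) ℝ) : Prop :=
  ∃ (N : ℕ) (q : Fin N → MvPolynomial (Fin n) ℝ), p = ∑ i, (q i) ^ 2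

/-- `ḣ(x,u) = ∇h(x)ᵀ(f(x) + g(x)u)` as a polynomial in `x`, for a fixed input vector `u`. -/
noncomputable def HdotPoly {n nu : ℕ} (h : MvPolynomial (Fin n) ℝ)
    (f : Fin n → MvPolynomial (Fin n) ℝ) (g : Fin n → Fin nu → MvPolynomial (Fin n) ℝ)
    (u : Fin nu → ℝ) : MvPolynomial (Fin n) ℝ :=
  ∑ i, pderiv i h * (f i + ∑ j, C (u j) * g i j)

/-- `ḣ(x,u)` evaluated at the state `x`. -/
noncomputable def HdotFun {n nu : ℕ} (h : MvPolynomial (Fin n) ℝ)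
    (f : Fin n → MvPolynomial (Fin n) ℝ) (g : Fin n → Fin nu → MvPolynomial (Fin n) ℝ)
    (x : Fin n → ℝ) (u : Fin nu → ℝ) : ℝ :=
  eval x (HdotPoly h f g u)

lemma IsSOS.eval_nonneg {n : ℕ} {p : MvPolynomial (Fin n) ℝ} (hp : IsSOS p)
    (x : Fin n → ℝ) : 0 ≤ eval x p := by
  obtain ⟨N, q, rfl⟩ := hp
  rw [map_sum]
  exact Finset.sum_nonneg fun i _ => by rw [map_pow]; positivity

theorem cbf_s_procedure_sufficient {n nu m : ℕ}
    (h : MvPolynomial (Fin n) ℝ)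
    (f : Fin n → MvPolynomial (Fin n) ℝ) (g : Fin n → Fin nu → MvPolynomial (Fin n) ℝ)
    (uvert : Fin m → Fin nu → ℝ)
    (κh βminus : ℝ) (hκ : 0 < κh) (hβ : βminus < 0)
    (mu0 : MvPolynomial (Fin n) ℝ) (mu : Fin m → MvPolynomial (Fin n) ℝ)
    (hmu0 : IsSOS mu0) (hmu : ∀ i, IsSOS (mu i))
    (hmain : IsSOS ((1 + mu0) * (C βminus - h)
        + ∑ i, mu i * (HdotPoly h f g (uvert i) + C κh * h))) :
    ∀ x : Fin n → ℝ, eval x h > βminus →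
      ∃ u ∈ convexHull ℝ (Set.range uvert), HdotFun h f g x u > -κh * eval x h := by
  intro x hx
  have hs := hmain.eval_nonneg x
  rw [map_add, map_mul, map_add, map_sub, map_one, eval_C, map_sum] at hs
  have ha0 : 0 ≤ eval x mu0 := hmu0.eval_nonneg x
  have hA : (1 + eval x mu0) * (βminus - eval x h) < 0 := by
    apply mul_neg_of_pos_of_neg <;> linarith
  have hsum : 0 < ∑ i, eval x (mu i * (HdotPoly h f g (uvert i) + C κh * h)) := by
    linarith
  obtain ⟨i, -, hi⟩ : ∃ i ∈ Finset.univ,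
      0 < eval x (mu i * (HdotPoly h f g (uvert i) + C κh * h)) := by
    by_contra hc
    push_neg at hc
    have : ∑ i, eval x (mu i * (HdotPoly h f g (uvert i) + C κh * h)) ≤ 0 :=
      Finset.sum_nonpos fun i _ => hc i (Finset.mem_univ i)
    linarith
  rw [map_mul, map_add, map_mul, eval_C] at hi
  have hmi : 0 ≤ eval x (mu i) := (hmu i).eval_nonneg x
  have hpos : 0 < eval x (HdotPoly h f g (uvert i)) + κh * eval x h := by
    by_contra hc
    push_neg at hc
    nlinarith
  exact ⟨uvert i, subset_convexHull ℝ _ (Set.mem_range_self i), by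
    unfold HdotFun; linarith⟩
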